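/- Let N be a 2-step nilpotent Lie group with left-invariant pseudoriemannian metric. Then the curvature operator annihilates the degenerate (null) part U of the center: R(u, x)y = 0 and R(x,y)u = 0 for all u ∈ U and x,y ∈ n; moreover R(z,z')z'' = 0 for all z,z',z'' in the center. In particular all planes tangent to the center are homaloidal (⟨R(x,y)y,x⟩ = 0). -/

import Mathlib

/-- Let `N` be a 2-step nilpotent Lie group with left-invariant pseudoriemannian
metric, with Lie algebra `n = U ⊕ Z ⊕ V ⊕ E` (`U ⊕ Z` the center, `U` its null
part), Levi-Civita connection `∇_x y = ½([x,y] - ad⁺_x y - ad⁺_y x)` and curvature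
`R(x,y)w = ∇_x ∇_y w - ∇_y ∇_x w - ∇_{[x,y]} w`.  Then the curvature operator
annihilates the null part `U` of the center: `R(u,x)y = 0` and `R(x,y)u = 0` for all
`u ∈ U` and `x, y ∈ n`; moreover `R(z,z')z'' = 0` for all `z, z', z''` in the
center.  In particular all planes tangent to the center are homaloidal:
`⟨R(c,c')c', c⟩ = 0`. -/
theorem central_planes_homaloidal
    {n : Type*} [LieRing n] [LieAlgebra ℝ n]
    (B : LinearMap.BilinForm ℝ n) (hBsymm : ∀ x y : n, B x y = B y x)
    (hBnd : B.Nondegenerate)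
    (U Z V E : Submodule ℝ n)
    (hcent : ∀ c ∈ U ⊔ Z, ∀ x : n, ⁅c, x⁆ = 0)
    (h2step : ∀ x y : n, ⁅x, y⁆ ∈ U ⊔ Z)
    (hdecomp : U ⊔ Z ⊔ V ⊔ E = ⊤)
    (hUU : ∀ u ∈ U, ∀ u' ∈ U, B u u' = 0)
    (hVV : ∀ v ∈ V, ∀ v' ∈ V, B v v' = 0)
    (hUZ : ∀ u ∈ U, ∀ z ∈ Z, B u z = 0)
    (hUE : ∀ u ∈ U, ∀ e ∈ E, B u e = 0)
    (hVZ : ∀ v ∈ V, ∀ z ∈ Z, B v z = 0)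
    (hVE : ∀ v ∈ V, ∀ e ∈ E, B v e = 0)
    (hZE : ∀ z ∈ Z, ∀ e ∈ E, B z e = 0)
    (adP : n →ₗ[ℝ] n →ₗ[ℝ] n)
    (hadP : ∀ x y w : n, B (adP x y) w = B y ⁅x, w⁆)
    (nabla : n → n → n)
    (hnabla : ∀ x y : n, nabla x y = (2:ℝ)⁻¹ • (⁅x, y⁆ - adP x y - adP y x))
    (R : n → n → n → n)
    (hR : ∀ x y w : n,
      R x y w = nabla x (nabla y w) - nabla y (nabla x w) - nabla ⁅x, y⁆ w) :
    (∀ u ∈ U, ∀ x y : n, R u x y = 0 ∧ R x y u = 0) ∧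
    (∀ c ∈ U ⊔ Z, ∀ c' ∈ U ⊔ Z, ∀ c'' ∈ U ⊔ Z, R c c' c'' = 0) ∧
    (∀ c ∈ U ⊔ Z, ∀ c' ∈ U ⊔ Z, B (R c c' c') c = 0) := by

  -- B pairs U trivially against the center
  have hBu : ∀ u ∈ U, ∀ c ∈ (U ⊔ Z : Submodule ℝ n), B u c = 0 := by
    intro u hu c hc
    obtain ⟨a, ha, z, hz, rfl⟩ := Submodule.mem_sup.mp hc
    rw [map_add, hUU u hu a ha, hUZ u hu z hz, add_zero]
  -- ad⁺ vanishes with central first argument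
  have hadPc : ∀ c ∈ (U ⊔ Z : Submodule ℝ n), ∀ y : n, adP c y = 0 := by
    intro c hc y
    apply hBnd.1
    intro w
    rw [hadP, hcent c hc w, map_zero]
  -- ad⁺ vanishes with second argument in U
  have hadPU : ∀ x : n, ∀ u ∈ U, adP x u = 0 := by
    intro x u hu
    apply hBnd.1
    intro w
    rw [hadP]
    exact hBu u hu _ (h2step x w)
  have hn0r : ∀ x : n, nabla x 0 = 0 := by
    intro x; rw [hnabla]; simp
  have hn0l : ∀ y : n, nabla 0 y = 0 := by
    intro y; rw [hnabla]; simp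
  have hnUl : ∀ u ∈ U, ∀ y : n, nabla u y = 0 := by
    intro u hu y
    have huz : u ∈ (U ⊔ Z : Submodule ℝ n) := Submodule.mem_sup_left hu
    rw [hnabla, hcent u huz y, hadPc u huz y, hadPU y u hu]
    simp
  have hnUr : ∀ x : n, ∀ u ∈ U, nabla x u = 0 := by
    intro x u hu
    have huz : u ∈ (U ⊔ Z : Submodule ℝ n) := Submodule.mem_sup_left hu
    rw [hnabla, ← lie_skew, hcent u huz x, hadPU x u hu, hadPc u huz x]
    simp
  have hncc : ∀ c ∈ (U ⊔ Z : Submodule ℝ n), ∀ c' ∈ (U ⊔ Z : Submodule ℝ n),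
      nabla c c' = 0 := by
    intro c hc c' hc'
    rw [hnabla, hcent c hc c', hadPc c hc c', hadPc c' hc' c]
    simp
  have h2 : ∀ c ∈ (U ⊔ Z : Submodule ℝ n), ∀ c' ∈ (U ⊔ Z : Submodule ℝ n),
      ∀ c'' ∈ (U ⊔ Z : Submodule ℝ n), R c c' c'' = 0 := by
    intro c hc c' hc' c'' hc''
    rw [hR, hncc c' hc' c'' hc'', hncc c hc c'' hc'', hn0r, hn0r,
      hcent c hc c', hn0l]
    simp
  refine ⟨?_, h2, ?_⟩
  · intro u hu x y
    have huz : u ∈ (U ⊔ Z : Submodule ℝ n) := Submodule.mem_sup_left hu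
    constructor
    · rw [hR, hnUl u hu, hnUl u hu, hn0r, hcent u huz x, hn0l]
      simp
    · rw [hR, hnUr y u hu, hnUr x u hu, hn0r, hn0r,
        hnUr ⁅x, y⁆ u hu]
      simp
  · intro c hc c' hc'
    rw [h2 c hc c' hc' c' hc', map_zero]
    rfl
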